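/- Let ξ, ξ₁, ξ₂, … be i.i.d. real random variables with E ξ = −a < 0, and let τ = min{n ≥ 1 : ξ₁ + … + ξ_n ≤ 0}. If E exp(λ ξ) < ∞ for some λ > 0, then there exists a constant c > 0 (depending on the distribution of ξ) such that E exp(c τ) < ∞. -/

import Mathlib

open MeasureTheory ProbabilityTheory Filter Set
open scoped ENNReal NNReal


lemma exp_slope_bound {lam x t : ℝ} (hlam : 0 < lam) (ht : 0 < t) (htl : t ≤ lam / 2) :
    |(Real.exp (t * x) - 1) / t| ≤ |x| + (2 / lam) * Real.exp (lam * x) := by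
  have hb : 0 ≤ (2 / lam) * Real.exp (lam * x) := by positivity
  rw [abs_le]
  constructor
  · have h1 : t * x + 1 ≤ Real.exp (t * x) := Real.add_one_le_exp _
    have h2 : x ≤ (Real.exp (t * x) - 1) / t := by
      rw [le_div_iff₀ ht]; nlinarith
    have h3 : -|x| ≤ x := neg_abs_le x
    linarith
  · rcases le_or_gt x 0 with hx | hx
    · have h1 : Real.exp (t * x) ≤ 1 := Real.exp_le_one_iff.2 (by nlinarith)
      have : (Real.exp (t * x) - 1) / t ≤ 0 :=
        div_nonpos_of_nonpos_of_nonneg (by linarith) ht.le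
      have := abs_nonneg x
      linarith
    · have hkey : Real.exp (t * x) - 1 ≤ t * x * Real.exp (t * x) := by
        have h1 : 1 - t * x ≤ Real.exp (-(t * x)) := by
          have := Real.add_one_le_exp (-(t * x)); linarith
        have h2 : Real.exp (-(t * x)) * Real.exp (t * x) = 1 := by
          rw [← Real.exp_add]; simp
        nlinarith [Real.exp_pos (t * x)]
      have h4 : (Real.exp (t * x) - 1) / t ≤ x * Real.exp (t * x) := by
        rw [div_le_iff₀ ht]; nlinarith
      have h5 : Real.exp (t * x) ≤ Real.exp (lam / 2 * x) :=
        Real.exp_le_exp.2 (by nlinarith)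
      have h6 : x ≤ 2 / lam * Real.exp (lam / 2 * x) := by
        have h := Real.add_one_le_exp (lam / 2 * x)
        rw [div_mul_eq_mul_div, le_div_iff₀ hlam]
        nlinarith
      have h7 : Real.exp (lam / 2 * x) * Real.exp (lam / 2 * x) = Real.exp (lam * x) := by
        rw [← Real.exp_add]; ring_nf
      have h8 : x * Real.exp (t * x) ≤ 2 / lam * Real.exp (lam * x) := by
        calc x * Real.exp (t * x) ≤ x * Real.exp (lam / 2 * x) := by
              exact mul_le_mul_of_nonneg_left h5 hx.le
          _ ≤ (2 / lam * Real.exp (lam / 2 * x)) * Real.exp (lam / 2 * x) := by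
              exact mul_le_mul_of_nonneg_right h6 (Real.exp_pos _).le
          _ = 2 / lam * Real.exp (lam * x) := by rw [mul_assoc, h7]
      have := abs_nonneg x
      linarith

lemma exists_small_mgf_lt_one {Ω : Type*} [MeasurableSpace Ω] {μ : Measure Ω}
    [IsProbabilityMeasure μ] {X : Ω → ℝ} (hX : Measurable X) (hint : Integrable X μ)
    {a : ℝ} (ha : 0 < a) (hmean : ∫ ω, X ω ∂μ = -a)
    {lam : ℝ} (hlam : 0 < lam) (hmom : Integrable (fun ω => Real.exp (lam * X ω)) μ) :
    ∃ t : ℝ, 0 < t ∧ t ≤ lam ∧ Integrable (fun ω => Real.exp (t * X ω)) μ ∧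
      ∫ ω, Real.exp (t * X ω) ∂μ < 1 := by
  have hIntT : ∀ t : ℝ, 0 < t → t ≤ lam → Integrable (fun ω => Real.exp (t * X ω)) μ := by
    intro t ht htl
    refine Integrable.mono' ((integrable_const (1:ℝ)).add hmom)
      ((hX.const_mul t).exp.aestronglyMeasurable) (ae_of_all _ fun ω => ?_)
    rw [Real.norm_eq_abs, abs_of_pos (Real.exp_pos _)]
    rcases le_or_gt (X ω) 0 with hx | hx
    · have : Real.exp (t * X ω) ≤ 1 := Real.exp_le_one_iff.2 (by nlinarith)
      have := (Real.exp_pos (lam * X ω)).le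
      simpa using by linarith
    · have : Real.exp (t * X ω) ≤ Real.exp (lam * X ω) :=
        Real.exp_le_exp.2 (by nlinarith)
      simpa using by linarith
  -- sequence t n = lam / (2 * (n+1))
  set t : ℕ → ℝ := fun n => lam / (2 * (n + 1)) with htdef
  have htpos : ∀ n, 0 < t n := fun n => by positivity
  have htle : ∀ n, t n ≤ lam / 2 := by
    intro n
    have h1 : (1:ℝ) ≤ (n:ℝ) + 1 := by
      have : (0:ℝ) ≤ (n:ℝ) := Nat.cast_nonneg n
      linarith
    apply div_le_div_of_nonneg_left hlam.le (by norm_num)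
    linarith
  have htlam : ∀ n, t n ≤ lam := fun n => le_trans (htle n) (by linarith)
  have httend : Tendsto t atTop (nhds 0) := by
    have h1 : Tendsto (fun n : ℕ => 1 / ((n : ℝ) + 1)) atTop (nhds 0) :=
      tendsto_one_div_add_atTop_nhds_zero_nat
    have h2 : Tendsto (fun n : ℕ => (lam / 2) * (1 / ((n : ℝ) + 1))) atTop
        (nhds ((lam / 2) * 0)) := h1.const_mul _
    have heq : t = fun n : ℕ => (lam / 2) * (1 / ((n : ℝ) + 1)) := by
      funext n
      rw [htdef]
      field_simp
    rw [heq]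
    simpa using h2
  -- dominated convergence
  set F : ℕ → Ω → ℝ := fun n ω => (Real.exp (t n * X ω) - 1) / t n with hFdef
  have hDCT : Tendsto (fun n => ∫ ω, F n ω ∂μ) atTop (nhds (∫ ω, X ω ∂μ)) := by
    refine tendsto_integral_of_dominated_convergence
      (fun ω => |X ω| + (2 / lam) * Real.exp (lam * X ω))
      (fun n => (((hX.const_mul (t n)).exp.sub measurable_const).div_const
        (t n)).aestronglyMeasurable)
      (hint.abs.add (hmom.const_mul _)) (fun n => ae_of_all _ fun ω => ?_)
      (ae_of_all _ fun ω => ?_)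
    · rw [Real.norm_eq_abs]
      exact exp_slope_bound hlam (htpos n) (htle n)
    · -- pointwise limit
      set x := X ω
      have hd : HasDerivAt (fun s : ℝ => Real.exp (s * x)) x 0 := by
        have h1 : HasDerivAt (fun s : ℝ => s * x) (1 * x) 0 := (hasDerivAt_id 0).mul_const x
        have h2 := h1.exp
        simpa using h2
      have hslope := hasDerivAt_iff_tendsto_slope.1 hd
      have hwithin : Tendsto t atTop (nhdsWithin 0 {(0:ℝ)}ᶜ) :=
        tendsto_nhdsWithin_of_tendsto_nhds_of_eventually_within _ httend
          (Eventually.of_forall fun n => (htpos n).ne')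
      have := hslope.comp hwithin
      convert this using 2 with n
      simp [hFdef, slope_def_field, Real.exp_zero]
      rfl
  rw [hmean] at hDCT
  have hev : ∀ᶠ n in atTop, ∫ ω, F n ω ∂μ < 0 :=
    (tendsto_order.1 hDCT).2 0 (by linarith)
  obtain ⟨n, hn⟩ := hev.exists
  refine ⟨t n, htpos n, htlam n, hIntT _ (htpos n) (htlam n), ?_⟩
  have hI : ∫ ω, F n ω ∂μ = ((∫ ω, Real.exp (t n * X ω) ∂μ) - 1) / t n := by
    simp only [hFdef]
    rw [integral_div, integral_sub (hIntT _ (htpos n) (htlam n)) (integrable_const 1)]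
    simp
  rw [hI] at hn
  have ht := htpos n
  by_contra hge
  push_neg at hge
  have : 0 ≤ (∫ ω, Real.exp (t n * X ω) ∂μ - 1) / t n :=
    div_nonneg (by linarith) ht.le
  linarith

lemma tau_measurable {Ω : Type*} [MeasurableSpace Ω] (ξ : ℕ → Ω → ℝ)
    (hmeas : ∀ i, Measurable (ξ i)) (τ : Ω → ℕ)
    (hτ : ∀ ω, τ ω = sInf {n : ℕ | 1 ≤ n ∧ ∑ i ∈ Finset.range n, ξ i ω ≤ 0}) :
    Measurable τ := by
  have hS : ∀ n : ℕ, Measurable fun ω => ∑ i ∈ Finset.range n, ξ i ω := fun n =>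
    Finset.measurable_sum _ fun i _ => hmeas i
  have hA : ∀ m : ℕ, MeasurableSet {ω | 1 ≤ m ∧ ∑ i ∈ Finset.range m, ξ i ω ≤ 0} := by
    intro m
    rcases Nat.eq_zero_or_pos m with h | h
    · subst h; simp
    · have heq : {ω | 1 ≤ m ∧ ∑ i ∈ Finset.range m, ξ i ω ≤ 0}
          = {ω | ∑ i ∈ Finset.range m, ξ i ω ≤ 0} := by
        ext ω; exact ⟨fun hh => hh.2, fun hh => ⟨h, hh⟩⟩
      rw [heq]
      exact measurableSet_le (hS m) measurable_const
  apply measurable_to_countable'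
  intro n
  have hkey : τ ⁻¹' {n} =
      ({ω | 1 ≤ n ∧ ∑ i ∈ Finset.range n, ξ i ω ≤ 0} ∩
        ⋂ m, ⋂ _ : m < n, {ω | 1 ≤ m ∧ ∑ i ∈ Finset.range m, ξ i ω ≤ 0}ᶜ) ∪
      ({ω | n = 0} ∩ ⋂ k, {ω | 1 ≤ k ∧ ∑ i ∈ Finset.range k, ξ i ω ≤ 0}ᶜ) := by
    ext ω
    simp only [mem_preimage, mem_singleton_iff, hτ ω, mem_union, mem_inter_iff, mem_iInter,
      mem_compl_iff, mem_setOf_eq]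
    constructor
    · rintro rfl
      by_cases hne : {k : ℕ | 1 ≤ k ∧ ∑ i ∈ Finset.range k, ξ i ω ≤ 0}.Nonempty
      · left
        exact ⟨Nat.sInf_mem hne, fun m hm => Nat.notMem_of_lt_sInf hm⟩
      · right
        rw [Set.not_nonempty_iff_eq_empty] at hne
        refine ⟨?_, fun k hk => ?_⟩
        · rw [hne, Nat.sInf_empty]
        · have hm : k ∈ {k : ℕ | 1 ≤ k ∧ ∑ i ∈ Finset.range k, ξ i ω ≤ 0} := hk
          rw [hne] at hm
          exact hm
    · rintro (⟨hn, hmin⟩ | ⟨h0, hall⟩)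
      · refine le_antisymm (Nat.sInf_le hn) ?_
        by_contra hlt
        push_neg at hlt
        have hmem : sInf {n : ℕ | 1 ≤ n ∧ ∑ i ∈ Finset.range n, ξ i ω ≤ 0}
            ∈ {n : ℕ | 1 ≤ n ∧ ∑ i ∈ Finset.range n, ξ i ω ≤ 0} := Nat.sInf_mem ⟨n, hn⟩
        exact hmin _ hlt hmem
      · have he : {k : ℕ | 1 ≤ k ∧ ∑ i ∈ Finset.range k, ξ i ω ≤ 0} = ∅ :=
          Set.eq_empty_iff_forall_notMem.2 fun k hk => hall k hk
        rw [he, Nat.sInf_empty, h0]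
  rw [hkey]
  refine MeasurableSet.union
    ((hA n).inter (MeasurableSet.iInter fun m => MeasurableSet.iInter fun _ => (hA m).compl))
    (MeasurableSet.inter ?_ (MeasurableSet.iInter fun k => (hA k).compl))
  by_cases h : n = 0 <;> simp [h]

lemma integrable_exp_of_tail {Ω : Type*} [MeasurableSpace Ω] {μ : Measure Ω}
    [IsProbabilityMeasure μ] {τ : Ω → ℕ} (hτm : Measurable τ) {r : ℝ}
    (hr0 : 0 < r) (hr1 : r < 1)
    (htail : ∀ n : ℕ, μ {ω | n < τ ω} ≤ ENNReal.ofReal (r ^ n)) :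
    ∃ c : ℝ, 0 < c ∧ Integrable (fun ω => Real.exp (c * (τ ω : ℝ))) μ := by
  set q := Real.sqrt r with hqdef
  have hq0 : 0 < q := Real.sqrt_pos.2 hr0
  have hq1 : q < 1 := by
    rw [hqdef, show (1:ℝ) = Real.sqrt 1 by simp]
    exact Real.sqrt_lt_sqrt hr0.le hr1
  have hqq : q * q = r := Real.mul_self_sqrt hr0.le
  set c := -Real.log q with hcdef
  have hc : 0 < c := neg_pos.2 (Real.log_neg hq0 hq1)
  have hec : Real.exp c = q⁻¹ := by rw [hcdef, Real.exp_neg, Real.exp_log hq0]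
  have hτR : Measurable fun ω => ((τ ω : ℕ) : ℝ) := measurable_from_top.comp hτm
  have hm : Measurable fun ω => Real.exp (c * (τ ω : ℝ)) :=
    (hτR.const_mul c).exp
  refine ⟨c, hc, hm.aestronglyMeasurable, ?_⟩
  have hms : ∀ m : ℕ, MeasurableSet {ω | m < τ ω} := fun m => hτm measurableSet_Ioi
  have hpt : ∀ ω, (‖Real.exp (c * (τ ω : ℝ))‖₊ : ℝ≥0∞)
      ≤ 1 + ∑' m : ℕ, Set.indicator {ω' | m < τ ω'}
        (fun _ => ENNReal.ofReal (Real.exp (c * (m + 1)))) ω := by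
    intro ω
    rw [← enorm_eq_nnnorm, Real.enorm_eq_ofReal (Real.exp_pos _).le]
    rcases Nat.eq_zero_or_pos (τ ω) with h0 | hpos
    · rw [h0]
      simp
    · obtain ⟨k, hk⟩ : ∃ k, τ ω = k + 1 := ⟨τ ω - 1, by omega⟩
      calc ENNReal.ofReal (Real.exp (c * (τ ω : ℝ)))
          = Set.indicator {ω' | k < τ ω'}
            (fun _ => ENNReal.ofReal (Real.exp (c * (k + 1)))) ω := by
            rw [Set.indicator_of_mem (by simp [hk] : ω ∈ {ω' | k < τ ω'})]
            rw [hk]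
            push_cast
            ring_nf
        _ ≤ ∑' m : ℕ, Set.indicator {ω' | m < τ ω'}
            (fun _ => ENNReal.ofReal (Real.exp (c * (m + 1)))) ω := ENNReal.le_tsum k
        _ ≤ _ := le_add_self
  have hgeom : ENNReal.ofReal q < 1 := by
    rw [← ENNReal.ofReal_one]
    exact ENNReal.ofReal_lt_ofReal_iff_of_nonneg hq0.le |>.2 hq1
  calc ∫⁻ ω, (‖Real.exp (c * (τ ω : ℝ))‖₊ : ℝ≥0∞) ∂μ
      ≤ ∫⁻ ω, (1 + ∑' m : ℕ, Set.indicator {ω' | m < τ ω'}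
          (fun _ => ENNReal.ofReal (Real.exp (c * (m + 1)))) ω) ∂μ := lintegral_mono hpt
    _ = 1 + ∑' m : ℕ, ENNReal.ofReal (Real.exp (c * (m + 1))) * μ {ω | m < τ ω} := by
        rw [lintegral_add_left measurable_const]
        rw [lintegral_const]
        simp only [measure_univ, mul_one]
        congr 1
        rw [lintegral_tsum (fun m => (measurable_const.indicator (hms m)).aemeasurable)]
        exact tsum_congr fun m => lintegral_indicator_const (hms m) _
    _ ≤ 1 + ∑' m : ℕ, ENNReal.ofReal (Real.exp (c * (m + 1))) * ENNReal.ofReal (r ^ m) :=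
        add_le_add_right (ENNReal.tsum_le_tsum fun m => mul_le_mul_right (htail m) _) 1
    _ = 1 + ∑' m : ℕ, ENNReal.ofReal q⁻¹ * (ENNReal.ofReal q) ^ m := by
        congr 1
        refine tsum_congr fun m => ?_
        rw [← ENNReal.ofReal_pow hq0.le,
          ← ENNReal.ofReal_mul (show (0:ℝ) ≤ Real.exp (c * ((m:ℝ) + 1)) from (Real.exp_pos _).le),
          ← ENNReal.ofReal_mul (show (0:ℝ) ≤ q⁻¹ by positivity)]
        congr 1
        have h1 : Real.exp (c * ((m : ℝ) + 1)) = (Real.exp c) ^ (m + 1) := by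
          rw [mul_comm, show ((m:ℝ) + 1) = ((m + 1 : ℕ) : ℝ) by push_cast; ring,
            Real.exp_nat_mul]
        rw [h1, hec, ← hqq]
        field_simp
        have hq' : q ≠ 0 := hq0.ne'
        rw [one_div, inv_pow]
        field_simp
        ring
    _ = 1 + ENNReal.ofReal q⁻¹ * ∑' m : ℕ, (ENNReal.ofReal q) ^ m := by
        rw [ENNReal.tsum_mul_left]
    _ = 1 + ENNReal.ofReal q⁻¹ * (1 - ENNReal.ofReal q)⁻¹ := by
        rw [ENNReal.tsum_geometric]
    _ < ⊤ := by
        refine ENNReal.add_lt_top.2 ⟨ENNReal.one_lt_top, ENNReal.mul_lt_top ?_ ?_⟩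
        · exact ENNReal.ofReal_lt_top
        · refine ENNReal.inv_lt_top.2 ?_
          rw [tsub_pos_iff_lt]
          exact hgeom

/-- **Exponential moments of the first descending ladder epoch.**
If `E exp(λ ξ) < ∞` for some `λ > 0`, then there is `c > 0` (depending on the
distribution of `ξ`) such that `E exp(c τ) < ∞`. -/
theorem ladder_epoch_exponential_moment
    {Ω : Type*} [MeasurableSpace Ω] {μ : Measure Ω} [IsProbabilityMeasure μ]
    (ξ : ℕ → Ω → ℝ) (hmeas : ∀ i, Measurable (ξ i))
    (hindep : iIndepFun ξ μ)
    (hident : ∀ i, IdentDistrib (ξ i) (ξ 0) μ μ)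
    (a : ℝ) (ha : 0 < a)
    (hint : Integrable (ξ 0) μ) (hmean : ∫ ω, ξ 0 ω ∂μ = -a)
    (lam : ℝ) (hlam : 0 < lam)
    (hmom : Integrable (fun ω => Real.exp (lam * ξ 0 ω)) μ)
    (τ : Ω → ℕ)
    (hτ : ∀ ω, τ ω = sInf {n : ℕ | 1 ≤ n ∧ ∑ i ∈ Finset.range n, ξ i ω ≤ 0}) :
    ∃ c : ℝ, 0 < c ∧ Integrable (fun ω => Real.exp (c * (τ ω : ℝ))) μ := by
  obtain ⟨t, ht0, htlam, htint, htlt⟩ :=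
    exists_small_mgf_lt_one (hmeas 0) hint ha hmean hlam hmom
  set r : ℝ := ∫ ω, Real.exp (t * ξ 0 ω) ∂μ with hrdef
  have hr0 : 0 < r := mgf_pos htint
  have hτm : Measurable τ := tau_measurable ξ hmeas τ hτ
  refine integrable_exp_of_tail hτm hr0 htlt ?_
  intro n
  rcases Nat.eq_zero_or_pos n with rfl | hn
  · simpa using prob_le_one
  have hint_i : ∀ i ∈ Finset.range n, Integrable (fun ω => Real.exp (t * ξ i ω)) μ := by
    intro i _
    have h := (hident i).comp (u := fun x => Real.exp (t * x))
      (Real.measurable_exp.comp (measurable_id.const_mul t))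
    exact h.integrable_iff.2 htint
  have hintS : Integrable (fun ω => Real.exp (t * (∑ i ∈ Finset.range n, ξ i) ω)) μ :=
    hindep.integrable_exp_mul_sum hmeas hint_i
  have hmgfS : ∫ ω, Real.exp (t * (∑ i ∈ Finset.range n, ξ i) ω) ∂μ = r ^ n := by
    have h1 : mgf (∑ i ∈ Finset.range n, ξ i) μ t = ∏ i ∈ Finset.range n, mgf (ξ i) μ t :=
      hindep.mgf_sum hmeas _
    have h2 : ∀ i, mgf (ξ i) μ t = r := by
      intro i
      have h := (hident i).comp (u := fun x => Real.exp (t * x))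
        (Real.measurable_exp.comp (measurable_id.const_mul t))
      exact h.integral_eq
    calc ∫ ω, Real.exp (t * (∑ i ∈ Finset.range n, ξ i) ω) ∂μ
        = mgf (∑ i ∈ Finset.range n, ξ i) μ t := rfl
      _ = ∏ i ∈ Finset.range n, mgf (ξ i) μ t := h1
      _ = r ^ n := by simp [h2]
  have hsub : {ω | n < τ ω}
      ⊆ {ω | (1:ℝ) ≤ Real.exp (t * (∑ i ∈ Finset.range n, ξ i) ω)} := by
    intro ω hω
    simp only [mem_setOf_eq] at hω ⊢
    have hnot : ¬ (1 ≤ n ∧ ∑ i ∈ Finset.range n, ξ i ω ≤ 0) := by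
      intro hc
      have hle : τ ω ≤ n := by rw [hτ ω]; exact Nat.sInf_le hc
      omega
    have hpos : 0 < ∑ i ∈ Finset.range n, ξ i ω := by
      by_contra hle
      push_neg at hle
      exact hnot ⟨hn, hle⟩
    have hnn : (0:ℝ) ≤ t * (∑ i ∈ Finset.range n, ξ i) ω := by
      rw [Finset.sum_apply]
      exact mul_nonneg ht0.le hpos.le
    exact Real.one_le_exp hnn
  have hmark := mul_meas_ge_le_integral_of_nonneg
    (ae_of_all _ fun ω => (Real.exp_pos _).le) hintS 1
  rw [one_mul, hmgfS] at hmark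
  calc μ {ω | n < τ ω}
      ≤ μ {ω | (1:ℝ) ≤ Real.exp (t * (∑ i ∈ Finset.range n, ξ i) ω)} := measure_mono hsub
    _ = ENNReal.ofReal (μ {ω | (1:ℝ) ≤ Real.exp (t * (∑ i ∈ Finset.range n, ξ i) ω)}).toReal :=
        (ENNReal.ofReal_toReal (measure_ne_top μ _)).symm
    _ ≤ ENNReal.ofReal (r ^ n) := ENNReal.ofReal_le_ofReal hmark
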